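/- Multi-source generalization bound: Fix μ > 0, probability measures P_1, ..., P_N and Q on X × Y, and weights α ∈ Δ = {α : α_j ≥ 0, Σ_j α_j = 1}. For any scoring function f ∈ F, L_Q(h_f) ≤ Σ_{j=1}^N α_j ( L^μ_{P_j}(f) + d^μ_f(P_j, Q) ) + β, where β = min_{g ∈ F} { Σ_{j=1}^N α_j L^μ_{P_j}(g) + L^μ_Q(g) }. -/

import Mathlib

open MeasureTheory

/-- The ramp loss `W_μ`. -/
noncomputable def ramp (μ v : ℝ) : ℝ :=
  if μ ≤ v then 0 else if v ≤ 0 then 1 else 1 - v / μ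

/-- The margin `ω_f(x,y) = (f(x)(y) - max_{y' ≠ y} f(x)(y'))/2` of a scoring function. -/
noncomputable def margin {X Y : Type*} [Fintype Y] [DecidableEq Y] [Nontrivial Y]
    (f : X → Y → ℝ) (x : X) (y : Y) : ℝ :=
  (f x y - (Finset.univ.erase y).sup'
      (by obtain ⟨b, hb⟩ := exists_ne y
          exact ⟨b, Finset.mem_erase.mpr ⟨hb, Finset.mem_univ b⟩⟩) (f x)) / 2

lemma ramp_nonneg {μ : ℝ} (hμ : 0 < μ) (v : ℝ) : 0 ≤ ramp μ v := by
  unfold ramp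
  split_ifs with h1 h2
  · exact le_refl _
  · norm_num
  · push_neg at h1 h2
    have : v / μ < 1 := (div_lt_one hμ).mpr h1
    linarith

lemma ramp_le_one {μ : ℝ} (hμ : 0 < μ) (v : ℝ) : ramp μ v ≤ 1 := by
  unfold ramp
  split_ifs with h1 h2
  · norm_num
  · exact le_refl _
  · push_neg at h1 h2
    have : 0 ≤ v / μ := le_of_lt (div_pos h2 hμ)
    linarith

lemma ramp_of_nonpos {μ v : ℝ} (hμ : 0 < μ) (hv : v ≤ 0) : ramp μ v = 1 := by
  unfold ramp
  split_ifs with h1 h2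
  · linarith
  · rfl

lemma margin_lt_of_pos {X Y : Type*} [Fintype Y] [DecidableEq Y] [Nontrivial Y]
    (g : X → Y → ℝ) (x : X) {y y' : Y} (h : y' ≠ y)
    (hpos : 0 < margin g x y) : g x y' < g x y := by
  unfold margin at hpos
  have hy' : y' ∈ Finset.univ.erase y := Finset.mem_erase.mpr ⟨h, Finset.mem_univ _⟩
  have l1 : g x y' ≤ (Finset.univ.erase y).sup' ⟨y', hy'⟩ (g x) := Finset.le_sup' (g x) hy'
  linarith

lemma margin_nonpos_of_ne {X Y : Type*} [Fintype Y] [DecidableEq Y] [Nontrivial Y]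
    (f : X → Y → ℝ) (x : X) {y y' : Y} (h : y' ≠ y) (hle : f x y ≤ f x y') :
    margin f x y ≤ 0 := by
  have hy' : y' ∈ Finset.univ.erase y := Finset.mem_erase.mpr ⟨h, Finset.mem_univ _⟩
  have l1 : f x y' ≤ (Finset.univ.erase y).sup' ⟨y', hy'⟩ (f x) := Finset.le_sup' (f x) hy'
  unfold margin
  linarith

/-- Multi-source generalization bound:
`L_Q(h_f) ≤ Σ_j α_j (L^μ_{P_j}(f) + d^μ_f(P_j, Q)) + β`, where `β` is the weighted ideal
combined margin loss over `F` and `d j` is the margin disparity discrepancy between `P j`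
and `Q` (a supremum over `F`), for the labeling function `lab f` induced by `f`. -/
theorem multi_source_bound {X Y : Type*} [MeasurableSpace X] [MeasurableSpace Y]
    [Fintype Y] [DecidableEq Y] [Nontrivial Y]
    {N : ℕ} (P : Fin N → Measure (X × Y)) [∀ j, IsProbabilityMeasure (P j)]
    (Q : Measure (X × Y)) [IsProbabilityMeasure Q]
    (μ : ℝ) (hμ : 0 < μ)
    (α : Fin N → ℝ) (hα0 : ∀ j, 0 ≤ α j) (hα1 : ∑ j, α j = 1)
    (F : Set (X → Y → ℝ)) (hF : F.Nonempty)
    (lab : (X → Y → ℝ) → X → Y)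
    (hlab : ∀ (g : X → Y → ℝ) (x : X) (y : Y), g x y ≤ g x (lab g x))
    (f : X → Y → ℝ) (hfF : f ∈ F)
    (β : ℝ)
    (hβ : IsLeast {v : ℝ | ∃ g ∈ F,
      v = (∑ j, α j * ∫ z, ramp μ (margin g z.1 z.2) ∂(P j))
        + ∫ z, ramp μ (margin g z.1 z.2) ∂Q} β)
    (d : Fin N → ℝ)
    (hd : ∀ j, IsLUB {v : ℝ | ∃ f' ∈ F,
      v = (∫ z, ramp μ (margin f' z.1 (lab f z.1)) ∂Q)
        - ∫ z, ramp μ (margin f' z.1 (lab f z.1)) ∂(P j)} (d j))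
    (hint : ∀ g ∈ F, ∀ j,
      Integrable (fun z : X × Y => ramp μ (margin g z.1 (lab f z.1))) (P j) ∧
      Integrable (fun z : X × Y => ramp μ (margin g z.1 (lab f z.1))) Q ∧
      Integrable (fun z : X × Y => ramp μ (margin g z.1 z.2)) (P j) ∧
      Integrable (fun z : X × Y => ramp μ (margin g z.1 z.2)) Q)
    (hind : Integrable (fun z : X × Y => if lab f z.1 ≠ z.2 then (1 : ℝ) else 0) Q) :
    (∫ z, (if lab f z.1 ≠ z.2 then (1 : ℝ) else 0) ∂Q)
      ≤ (∑ j, α j * ((∫ z, ramp μ (margin f z.1 z.2) ∂(P j)) + d j)) + β := by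
  obtain ⟨⟨g, hgF, hβeq⟩, -⟩ := hβ
  have hN : N ≠ 0 := by
    rintro rfl
    simp at hα1
  set j0 : Fin N := ⟨0, Nat.pos_of_ne_zero hN⟩
  have igQlab : Integrable (fun z : X × Y => ramp μ (margin g z.1 (lab f z.1))) Q :=
    (hint g hgF j0).2.1
  have igQ : Integrable (fun z : X × Y => ramp μ (margin g z.1 z.2)) Q :=
    (hint g hgF j0).2.2.2
  -- pointwise: indicator ≤ ramp (margin g z) + ramp (margin g (lab f))
  have hpw1 : ∀ z : X × Y, (if lab f z.1 ≠ z.2 then (1 : ℝ) else 0)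
      ≤ ramp μ (margin g z.1 z.2) + ramp μ (margin g z.1 (lab f z.1)) := by
    intro z
    by_cases h : lab f z.1 ≠ z.2
    · rw [if_pos h]
      rcases le_or_gt (margin g z.1 z.2) 0 with hm | hm
      · rw [ramp_of_nonpos hμ hm]
        have := ramp_nonneg hμ (margin g z.1 (lab f z.1)); linarith
      · have hle : margin g z.1 (lab f z.1) ≤ 0 := by
          by_contra hc
          push_neg at hc
          have h1 := margin_lt_of_pos g z.1 h hm
          have h2 := margin_lt_of_pos g z.1 (Ne.symm h) hc
          linarith
        rw [ramp_of_nonpos hμ hle]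
        have := ramp_nonneg hμ (margin g z.1 z.2); linarith
    · rw [if_neg h]
      have := ramp_nonneg hμ (margin g z.1 z.2)
      have := ramp_nonneg hμ (margin g z.1 (lab f z.1))
      linarith
  -- pointwise: ramp (margin g (lab f)) ≤ ramp (margin f z) + ramp (margin g z)
  have hpw2 : ∀ z : X × Y, ramp μ (margin g z.1 (lab f z.1))
      ≤ ramp μ (margin f z.1 z.2) + ramp μ (margin g z.1 z.2) := by
    intro z
    by_cases h : lab f z.1 = z.2
    · rw [h]
      have := ramp_nonneg hμ (margin f z.1 z.2); linarith
    · have hm : margin f z.1 z.2 ≤ 0 :=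
        margin_nonpos_of_ne f z.1 h (hlab f z.1 z.2)
      rw [ramp_of_nonpos hμ hm]
      have := ramp_le_one hμ (margin g z.1 (lab f z.1))
      have := ramp_nonneg hμ (margin g z.1 z.2)
      linarith
  have step1 : (∫ z, (if lab f z.1 ≠ z.2 then (1 : ℝ) else 0) ∂Q)
      ≤ (∫ z, ramp μ (margin g z.1 z.2) ∂Q)
        + ∫ z, ramp μ (margin g z.1 (lab f z.1)) ∂Q := by
    rw [← integral_add igQ igQlab]
    exact integral_mono hind (igQ.add igQlab) hpw1
  have step2 : ∀ j, (∫ z, ramp μ (margin g z.1 (lab f z.1)) ∂Q)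
      ≤ (∫ z, ramp μ (margin g z.1 (lab f z.1)) ∂(P j)) + d j := by
    intro j
    have hmem : (∫ z, ramp μ (margin g z.1 (lab f z.1)) ∂Q)
        - (∫ z, ramp μ (margin g z.1 (lab f z.1)) ∂(P j)) ∈
        {v : ℝ | ∃ f' ∈ F,
          v = (∫ z, ramp μ (margin f' z.1 (lab f z.1)) ∂Q)
            - ∫ z, ramp μ (margin f' z.1 (lab f z.1)) ∂(P j)} := ⟨g, hgF, rfl⟩
    have := (hd j).1 hmem
    linarith
  have step3 : ∀ j, (∫ z, ramp μ (margin g z.1 (lab f z.1)) ∂(P j))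
      ≤ (∫ z, ramp μ (margin f z.1 z.2) ∂(P j))
        + ∫ z, ramp μ (margin g z.1 z.2) ∂(P j) := by
    intro j
    rw [← integral_add (hint f hfF j).2.2.1 (hint g hgF j).2.2.1]
    exact integral_mono (hint g hgF j).1
      (((hint f hfF j).2.2.1).add (hint g hgF j).2.2.1) hpw2
  calc (∫ z, (if lab f z.1 ≠ z.2 then (1 : ℝ) else 0) ∂Q)
      ≤ (∫ z, ramp μ (margin g z.1 z.2) ∂Q)
        + ∫ z, ramp μ (margin g z.1 (lab f z.1)) ∂Q := step1
    _ = (∫ z, ramp μ (margin g z.1 z.2) ∂Q)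
        + ∑ j, α j * ∫ z, ramp μ (margin g z.1 (lab f z.1)) ∂Q := by
        rw [← Finset.sum_mul, hα1, one_mul]
    _ ≤ (∫ z, ramp μ (margin g z.1 z.2) ∂Q)
        + ∑ j, α j * (((∫ z, ramp μ (margin f z.1 z.2) ∂(P j)) + d j)
            + ∫ z, ramp μ (margin g z.1 z.2) ∂(P j)) := by
        apply add_le_add (le_refl _)
        apply Finset.sum_le_sum
        intro j _
        apply mul_le_mul_of_nonneg_left _ (hα0 j)
        have := step2 j
        have := step3 j
        linarith
    _ = (∑ j, α j * ((∫ z, ramp μ (margin f z.1 z.2) ∂(P j)) + d j))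
        + ((∑ j, α j * ∫ z, ramp μ (margin g z.1 z.2) ∂(P j))
            + ∫ z, ramp μ (margin g z.1 z.2) ∂Q) := by
        simp only [mul_add]
        rw [Finset.sum_add_distrib]
        ring
    _ = (∑ j, α j * ((∫ z, ramp μ (margin f z.1 z.2) ∂(P j)) + d j)) + β := by
        rw [hβeq]
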